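/- Let P be a finite poset that is a disjoint sum of chains, partitioned as P = P_1 + P_2 + ⋯ + P_m where P_i consists of t_i chains each with r_i points, and the values r_1, …, r_m are pairwise distinct. Then D(P) = max{ D(P_i) : 1 ≤ i ≤ m }. -/

import Mathlib

/-- A coloring `c` of a poset is distinguishing if the only color-preserving
order-automorphism is the identity. -/
def IsDistinguishing {α : Type*} [PartialOrder α] {C : Type*} (c : α → C) : Prop :=
  ∀ φ : α ≃o α, (∀ x, c (φ x) = c x) → ∀ x, φ x = x

/-- The distinguishing number of a poset. -/
noncomputable def distNum (α : Type*) [PartialOrder α] : ℕ :=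
  sInf {k | ∃ c : α → Fin k, IsDistinguishing c}

section Aux

def sigmaOrderIsoCongrRight {ι : Type*} {β : ι → Type*} [∀ i, Preorder (β i)]
    (e : ∀ i, β i ≃o β i) : (Σ i, β i) ≃o (Σ i, β i) where
  toEquiv := Equiv.sigmaCongrRight fun i => (e i).toEquiv
  map_rel_iff' := by
    rintro ⟨i, a⟩ ⟨j, b⟩
    constructor
    · rintro ⟨_, _, _, h⟩
      exact Sigma.LE.fiber _ _ _ ((e i).map_rel_iff.1 h)
    · rintro ⟨_, _, _, h⟩
      exact Sigma.LE.fiber _ _ _ ((e i).map_rel_iff.2 h)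

lemma distSet_nonempty (α : Type*) [PartialOrder α] [Fintype α] :
    {k | ∃ c : α → Fin k, IsDistinguishing c}.Nonempty :=
  ⟨Fintype.card α, (Fintype.equivFin α : α → Fin (Fintype.card α)),
    fun _ hφ x => (Fintype.equivFin α).injective (hφ x)⟩

lemma distNum_mem (α : Type*) [PartialOrder α] [Fintype α] :
    ∃ c : α → Fin (distNum α), IsDistinguishing c :=
  Nat.sInf_mem (distSet_nonempty α)

lemma distNum_le (α : Type*) [PartialOrder α] {k : ℕ} (c : α → Fin k)
    (hc : IsDistinguishing c) : distNum α ≤ k :=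
  Nat.sInf_le ⟨c, hc⟩

lemma isDistinguishing_component {ι : Type*} {β : ι → Type*} [∀ i, PartialOrder (β i)]
    [DecidableEq ι] {C : Type*} {c : (Σ i, β i) → C} (hc : IsDistinguishing c) (i : ι) :
    IsDistinguishing (fun z : β i => c ⟨i, z⟩) := by
  intro ψ hψ z
  set e : ∀ j, β j ≃o β j := fun j => if h : j = i then h.symm ▸ ψ else OrderIso.refl _ with he
  have hei : e i = ψ := dif_pos rfl
  have hej : ∀ j, j ≠ i → e j = OrderIso.refl _ := fun j h => dif_neg h
  have key := hc (sigmaOrderIsoCongrRight e) ?_ ⟨i, z⟩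
  · have h2 : (⟨i, e i z⟩ : Σ j, β j) = ⟨i, z⟩ := key
    have h3 := sigma_mk_injective h2
    rwa [hei] at h3
  · rintro ⟨j, w⟩
    show c ⟨j, e j w⟩ = c ⟨j, w⟩
    by_cases h : j = i
    · subst h; rw [hei]; exact hψ w
    · rw [hej j h]; rfl

end Aux

section Main

variable {m : ℕ} {t r : Fin m → ℕ}

local notation "P" => (Σ i : Fin m, Σ _ : Fin (t i), Fin (r i))

lemma card_comp (i : Fin m) (j : Fin (t i)) (a : Fin (r i)) :
    Nat.card {z : P // z ≤ ⟨i, j, a⟩ ∨ (⟨i, j, a⟩ : P) ≤ z} = r i := by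
  have hbij : Function.Bijective (fun k : Fin (r i) =>
      (⟨⟨i, j, k⟩, by
        rcases le_total k a with h | h
        · exact Or.inl (Sigma.LE.fiber _ _ _ (Sigma.LE.fiber _ _ _ h))
        · exact Or.inr (Sigma.LE.fiber _ _ _ (Sigma.LE.fiber _ _ _ h))⟩ :
        {z : P // z ≤ ⟨i, j, a⟩ ∨ (⟨i, j, a⟩ : P) ≤ z})) := by
    constructor
    · intro k k' hkk
      have h1 : (⟨i, ⟨j, k⟩⟩ : P) = ⟨i, ⟨j, k'⟩⟩ := congrArg Subtype.val hkk
      simpa using h1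
    · rintro ⟨⟨i', j', b⟩, hb | hb⟩ <;>
        rcases hb with ⟨_, _, _, h2⟩ <;> rcases h2 with ⟨_, _, _, _⟩ <;> exact ⟨b, rfl⟩
  rw [← Nat.card_eq_of_bijective _ hbij, Nat.card_eq_fintype_card, Fintype.card_fin]

lemma fst_apply (hinj : Function.Injective r) (φ : P ≃o P) (x : P) : (φ x).1 = x.1 := by
  apply hinj
  have key : ∀ y : P, Nat.card {z : P // z ≤ y ∨ y ≤ z} = r y.1 := by
    rintro ⟨i, j, a⟩; exact card_comp i j a
  have hcongr : Nat.card {z : P // z ≤ φ x ∨ φ x ≤ z} =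
      Nat.card {z : P // z ≤ x ∨ x ≤ z} := by
    refine (Nat.card_congr (Equiv.subtypeEquiv φ.toEquiv fun z => ?_)).symm
    constructor
    · rintro (h | h)
      · exact Or.inl (φ.le_iff_le.2 h)
      · exact Or.inr (φ.le_iff_le.2 h)
    · rintro (h | h)
      · exact Or.inl (φ.le_iff_le.1 h)
      · exact Or.inr (φ.le_iff_le.1 h)
  rw [← key, hcongr, key]

/-- restriction of an fst-preserving automorphism to a component -/
noncomputable def restrict (φ : P ≃o P) (hfst : ∀ x : P, (φ x).1 = x.1) (i : Fin m) :
    (Σ _ : Fin (t i), Fin (r i)) ≃o (Σ _ : Fin (t i), Fin (r i)) := by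
  have hfst' : ∀ x : P, (φ.symm x).1 = x.1 := fun x => by
    conv_rhs => rw [← φ.apply_symm_apply x]
    exact (hfst _).symm
  let F : ∀ z : (Σ _ : Fin (t i), Fin (r i)), (Σ _ : Fin (t i), Fin (r i)) := fun z =>
    cast (congrArg (fun k => Σ _ : Fin (t k), Fin (r k)) (hfst ⟨i, z⟩)) (φ ⟨i, z⟩).2
  let G : ∀ z : (Σ _ : Fin (t i), Fin (r i)), (Σ _ : Fin (t i), Fin (r i)) := fun z =>
    cast (congrArg (fun k => Σ _ : Fin (t k), Fin (r k)) (hfst' ⟨i, z⟩)) (φ.symm ⟨i, z⟩).2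
  have hF : ∀ z, φ ⟨i, z⟩ = ⟨i, F z⟩ := fun z =>
    Sigma.ext (hfst ⟨i, z⟩) (cast_heq _ _).symm
  have hG : ∀ z, φ.symm ⟨i, z⟩ = ⟨i, G z⟩ := fun z =>
    Sigma.ext (hfst' ⟨i, z⟩) (cast_heq _ _).symm
  refine ⟨⟨F, G, fun z => ?_, fun z => ?_⟩, ?_⟩
  · have : φ.symm ⟨i, F z⟩ = ⟨i, G (F z)⟩ := hG _
    rw [← hF z, φ.symm_apply_apply] at this
    exact (sigma_mk_injective this).symm
  · have : φ ⟨i, G z⟩ = ⟨i, F (G z)⟩ := hF _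
    rw [← hG z, φ.apply_symm_apply] at this
    exact (sigma_mk_injective this).symm
  · intro z w
    show F z ≤ F w ↔ z ≤ w
    rw [show (F z ≤ F w) ↔ ((⟨i, F z⟩ : Σ i : Fin m, Σ _ : Fin (t i), Fin (r i)) ≤ ⟨i, F w⟩)
      from (Sigma.mk_le_mk_iff (α := fun i : Fin m => Σ _ : Fin (t i), Fin (r i))
        (i := i) (a := F z) (b := F w)).symm, ← hF, ← hF, φ.le_iff_le, Sigma.mk_le_mk_iff]

/-- If `P` is a disjoint sum of chains, grouped as `P = P₁ + ⋯ + P_m` where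
`P i` consists of `t i` chains each with `r i` points and the `r i` are pairwise distinct,
then `D(P) = max_i D(P_i)`. -/
theorem distNum_sum_of_chain_groups (m : ℕ) (hm : 0 < m) (t r : Fin m → ℕ)
    (ht : ∀ i, 0 < t i) (hr : ∀ i, 0 < r i) (hinj : Function.Injective r) :
    distNum (Σ i : Fin m, Σ _ : Fin (t i), Fin (r i)) =
      Finset.univ.sup fun i : Fin m => distNum (Σ _ : Fin (t i), Fin (r i)) := by
  set K := Finset.univ.sup fun i : Fin m => distNum (Σ _ : Fin (t i), Fin (r i)) with hK
  apply le_antisymm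
  · -- distNum P ≤ K : combine component colorings
    choose c hc using fun i : Fin m => distNum_mem (Σ _ : Fin (t i), Fin (r i))
    have hle : ∀ i, distNum (Σ _ : Fin (t i), Fin (r i)) ≤ K := fun i => by
      rw [hK]; exact Finset.le_sup (f := fun i : Fin m => distNum (Σ _ : Fin (t i), Fin (r i))) (Finset.mem_univ i)
    set cc : (Σ i : Fin m, Σ _ : Fin (t i), Fin (r i)) → Fin K :=
      fun x => Fin.castLE (hle x.1) (c x.1 x.2) with hcc
    refine distNum_le _ cc ?_
    intro φ hφ x
    have hfst := fst_apply hinj φ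
    set ψ := restrict φ hfst x.1 with hψ
    have hFeq : ∀ z, φ ⟨x.1, z⟩ = ⟨x.1, ψ z⟩ := fun z =>
      Sigma.ext (hfst ⟨x.1, z⟩) (cast_heq _ _).symm
    have hψc : ∀ z, c x.1 (ψ z) = c x.1 z := by
      intro z
      have h1 := hφ ⟨x.1, z⟩
      rw [hFeq z] at h1
      have h2 : Fin.castLE (hle x.1) (c x.1 (ψ z)) = Fin.castLE (hle x.1) (c x.1 z) := h1
      exact Fin.castLE_injective _ h2
    have := hc x.1 ψ hψc x.2
    obtain ⟨i, z⟩ := x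
    have h3 : φ ⟨i, z⟩ = ⟨i, ψ z⟩ := hFeq z
    rw [h3, this]
  · -- K ≤ distNum P : restrict a distinguishing coloring
    rw [hK]
    apply Finset.sup_le
    intro i _
    obtain ⟨c, hc⟩ := distNum_mem (Σ i : Fin m, Σ _ : Fin (t i), Fin (r i))
    exact distNum_le _ (fun z => c ⟨i, z⟩) (isDistinguishing_component hc i)

end Main
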